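/- Let p be an odd prime, r a unit of ℤ_p reducing to a quadratic non-residue, and b, c positive integers. Then the equation x^2 - r·y^2 - p^{2c}·z^2 = u·p^{2c-1} has no solution in ℤ_p for any unit u ∈ {1, r}. -/
import Mathlib

lemma toZMod_zero_iff_dvd (p : ℕ) [Fact p.Prime] (x : ℤ_[p]) :
    PadicInt.toZMod x = 0 ↔ (p : ℤ_[p]) ∣ x := by
  rw [← RingHom.mem_ker, PadicInt.ker_toZMod, PadicInt.maximalIdeal_eq_span_p,
    Ideal.mem_span_singleton]

lemma aniso (p : ℕ) [Fact p.Prime] (r : ℤ_[p])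
    (hns : ¬ IsSquare (PadicInt.toZMod r)) (x y : ℤ_[p])
    (h : (p : ℤ_[p]) ∣ x ^ 2 - r * y ^ 2) : (p : ℤ_[p]) ∣ x ∧ (p : ℤ_[p]) ∣ y := by
  rw [← toZMod_zero_iff_dvd] at h ⊢
  rw [← toZMod_zero_iff_dvd]
  set X := PadicInt.toZMod x
  set Y := PadicInt.toZMod y
  have hXY : X ^ 2 = PadicInt.toZMod r * Y ^ 2 := by
    have := h
    simp only [map_sub, map_mul, map_pow] at this
    linear_combination this
  have hY : Y = 0 := by
    by_contra hY
    exact hns ⟨X * Y⁻¹, by field_simp; linear_combination -hXY⟩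
  refine ⟨?_, hY⟩
  have : X ^ 2 = 0 := by rw [hXY, hY]; ring
  exact pow_eq_zero_iff (two_ne_zero) |>.mp this

lemma aniso_pow (p : ℕ) [Fact p.Prime] (r : ℤ_[p])
    (hns : ¬ IsSquare (PadicInt.toZMod r)) :
    ∀ (k : ℕ) (x y : ℤ_[p]), (p : ℤ_[p]) ^ (2 * k + 1) ∣ x ^ 2 - r * y ^ 2 →
      (p : ℤ_[p]) ^ (k + 1) ∣ x ∧ (p : ℤ_[p]) ^ (k + 1) ∣ y := by
  intro k
  induction k with
  | zero =>
    intro x y h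
    simpa using aniso p r hns x y (by simpa using h)
  | succ k ih =>
    intro x y h
    have h1 : (p : ℤ_[p]) ∣ x ^ 2 - r * y ^ 2 :=
      dvd_trans (dvd_pow_self _ (by omega)) h
    obtain ⟨hx, hy⟩ := aniso p r hns x y h1
    obtain ⟨x', rfl⟩ := hx
    obtain ⟨y', rfl⟩ := hy
    have hne : ((p : ℤ_[p]) ^ 2) ≠ 0 := by
      apply pow_ne_zero
      exact_mod_cast (Nat.cast_ne_zero (R := ℤ_[p])).mpr (Fact.out (p := p.Prime)).ne_zero
    have h2 : (p : ℤ_[p]) ^ (2 * k + 1) ∣ x' ^ 2 - r * y' ^ 2 := by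
      have : (p : ℤ_[p]) ^ 2 * ((p : ℤ_[p]) ^ (2 * k + 1)) ∣
          (p : ℤ_[p]) ^ 2 * (x' ^ 2 - r * y' ^ 2) := by
        have e1 : (p : ℤ_[p]) ^ 2 * ((p : ℤ_[p]) ^ (2 * k + 1)) =
            (p : ℤ_[p]) ^ (2 * (k + 1) + 1) := by ring
        have e2 : (p : ℤ_[p]) ^ 2 * (x' ^ 2 - r * y' ^ 2) =
            ((p : ℤ_[p]) * x') ^ 2 - r * ((p : ℤ_[p]) * y') ^ 2 := by ring
        rw [e1, e2]; exact h
      exact (mul_dvd_mul_iff_left hne).mp this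
    obtain ⟨hx', hy'⟩ := ih x' y' h2
    constructor
    · obtain ⟨w, rfl⟩ := hx'
      exact ⟨w, by ring⟩
    · obtain ⟨w, rfl⟩ := hy'
      exact ⟨w, by ring⟩

theorem stmt14 (p : ℕ) [Fact p.Prime] (hp : p ≠ 2) (b c : ℕ) (hb : 1 ≤ b) (hc : 1 ≤ c)
    (r : ℤ_[p]) (hr : IsUnit r) (hns : ¬ IsSquare (PadicInt.toZMod r))
    (u : ℤ_[p]) (hu : u ∈ ({1, r} : Set ℤ_[p])) :
    ¬ ∃ x y z : ℤ_[p],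
        x ^ 2 - r * y ^ 2 - (p : ℤ_[p]) ^ (2 * c) * z ^ 2
          = u * (p : ℤ_[p]) ^ (2 * c - 1) := by
  rintro ⟨x, y, z, heq⟩
  have hcu : 2 * c = (2 * (c - 1) + 1) + 1 := by omega
  have key : x ^ 2 - r * y ^ 2 =
      (p : ℤ_[p]) ^ (2 * (c - 1) + 1) * (u + (p : ℤ_[p]) * z ^ 2) := by
    have e : 2 * c - 1 = 2 * (c - 1) + 1 := by omega
    rw [e] at heq
    have : x ^ 2 - r * y ^ 2 = u * (p : ℤ_[p]) ^ (2 * (c - 1) + 1) +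
        (p : ℤ_[p]) ^ (2 * c) * z ^ 2 := by linear_combination heq
    rw [this, hcu]; ring
  obtain ⟨hx, hy⟩ := aniso_pow p r hns (c - 1) x y ⟨_, key⟩
  -- now p^(2c) ∣ x^2 - r y^2, hence p ∣ u + p z^2, hence p ∣ u
  have hdvd : (p : ℤ_[p]) ^ (2 * c) ∣ x ^ 2 - r * y ^ 2 := by
    obtain ⟨a, rfl⟩ := hx
    obtain ⟨b', rfl⟩ := hy
    have e : 2 * c = 2 * ((c - 1) + 1) := by omega
    rw [e]
    exact ⟨a ^ 2 - r * b' ^ 2, by ring⟩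
  have hpu : (p : ℤ_[p]) ∣ u := by
    rw [key] at hdvd
    have hne : ((p : ℤ_[p]) ^ (2 * (c - 1) + 1)) ≠ 0 := by
      apply pow_ne_zero
      exact_mod_cast (Nat.cast_ne_zero (R := ℤ_[p])).mpr (Fact.out (p := p.Prime)).ne_zero
    have h1 : (p : ℤ_[p]) ^ (2 * (c - 1) + 1) * (p : ℤ_[p]) ∣
        (p : ℤ_[p]) ^ (2 * (c - 1) + 1) * (u + (p : ℤ_[p]) * z ^ 2) := by
      have e : (p : ℤ_[p]) ^ (2 * (c - 1) + 1) * (p : ℤ_[p]) = (p : ℤ_[p]) ^ (2 * c) := by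
        rw [hcu]; ring
      rw [e]; exact hdvd
    have h2 : (p : ℤ_[p]) ∣ u + (p : ℤ_[p]) * z ^ 2 := (mul_dvd_mul_iff_left hne).mp h1
    have : (p : ℤ_[p]) ∣ (p : ℤ_[p]) * z ^ 2 := Dvd.intro _ rfl
    simpa using (dvd_sub h2 this)
  have huu : IsUnit u := by
    rcases hu with h | h
    · rw [h]; exact isUnit_one
    · rw [h]; exact hr
  have hpunit : IsUnit (p : ℤ_[p]) := isUnit_of_dvd_unit hpu huu
  have : ‖(p : ℤ_[p])‖ = 1 := PadicInt.isUnit_iff.mp hpunit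
  rw [PadicInt.norm_p] at this
  have hp2 : (2 : ℝ) ≤ (p : ℝ) := by
    exact_mod_cast (Fact.out (p := p.Prime)).two_le
  have : (p : ℝ) = 1 := by
    field_simp at this
    linarith
  linarith
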